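/- arXiv:1211.0869 — 5 statements merged into one kernel-verified Lean document; each statement's English description precedes it below -/
import Mathlib

section
/- Let a < b be real numbers, let u, ψ : ℝ → ℝ be continuously differentiable on [a, b], let β : ℝ → ℝ satisfy ψ'(t) = β(t) for all t ∈ [a, b], and suppose the scaled flux is constant: u'(t) + β(t)·u(t) = J for all t ∈ [a, b], where J ∈ ℝ. Then ∫_a^b exp(ψ(t)) dt > 0, and defining the harmonic average β̂ := ( (1/(b−a)) ∫_a^b exp(ψ(t)) dt )⁻¹, one has β̂ · ( exp(ψ(b))·u(b) − exp(ψ(a))·u(a) ) = J·(b−a). -/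
/-- Exactness of the Scharfetter–Gummel edge flux formula: if the scaled flux
`u' + β·u` is constantly equal to `J` on `[a, b]` and `ψ' = β` on `[a, b]`,
then `∫_a^b exp (ψ t) dt > 0` and, with the harmonic average
`β̂ = ((1/(b-a)) ∫_a^b exp (ψ t) dt)⁻¹`, one has
`β̂ * (exp (ψ b) * u b - exp (ψ a) * u a) = J * (b - a)`. -/
theorem exp_fitting_harmonic_average_exact
    (a b : ℝ) (hab : a < b)
    (u u' ψ ψ' β : ℝ → ℝ) (J : ℝ)
    (hu : ∀ t ∈ Set.Icc a b, HasDerivWithinAt u (u' t) (Set.Icc a b) t)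
    (hu' : ContinuousOn u' (Set.Icc a b))
    (hψ : ∀ t ∈ Set.Icc a b, HasDerivWithinAt ψ (ψ' t) (Set.Icc a b) t)
    (hψ' : ContinuousOn ψ' (Set.Icc a b))
    (hβ : ∀ t ∈ Set.Icc a b, ψ' t = β t)
    (hflux : ∀ t ∈ Set.Icc a b, u' t + β t * u t = J) :
    (0 < ∫ t in a..b, Real.exp (ψ t)) ∧
    ((1 / (b - a)) * ∫ t in a..b, Real.exp (ψ t))⁻¹ *
        (Real.exp (ψ b) * u b - Real.exp (ψ a) * u a)
      = J * (b - a) := by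
  have hψc : ContinuousOn ψ (Set.Icc a b) := fun t ht =>
    (hψ t ht).continuousWithinAt
  have hexpc : ContinuousOn (fun t => Real.exp (ψ t)) (Set.Icc a b) :=
    Real.continuous_exp.comp_continuousOn hψc
  have hInt : IntervalIntegrable (fun t => Real.exp (ψ t)) MeasureTheory.volume a b := by
    apply ContinuousOn.intervalIntegrable
    rwa [Set.uIcc_of_le hab.le]
  have hpos : 0 < ∫ t in a..b, Real.exp (ψ t) := by
    apply intervalIntegral.intervalIntegral_pos_of_pos_on hInt
    · intro t _; exact Real.exp_pos _
    · exact hab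
  refine ⟨hpos, ?_⟩
  -- derivative of g t = exp (ψ t) * u t
  set g : ℝ → ℝ := fun t => Real.exp (ψ t) * u t with hg
  have hgderiv : ∀ t ∈ Set.Icc a b,
      HasDerivWithinAt g (J * Real.exp (ψ t)) (Set.Icc a b) t := by
    intro t ht
    have h1 : HasDerivWithinAt g
        (Real.exp (ψ t) * ψ' t * u t + Real.exp (ψ t) * u' t) (Set.Icc a b) t :=
      ((hψ t ht).exp).mul (hu t ht)
    have : Real.exp (ψ t) * ψ' t * u t + Real.exp (ψ t) * u' t
        = J * Real.exp (ψ t) := by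
      rw [hβ t ht]
      rw [← hflux t ht]; ring
    rwa [this] at h1
  have hgc : ContinuousOn g (Set.Icc a b) :=
    hexpc.mul (fun t ht => (hu t ht).continuousWithinAt)
  have hJInt : IntervalIntegrable (fun t => J * Real.exp (ψ t))
      MeasureTheory.volume a b := hInt.const_mul J
  have hftc : ∫ t in a..b, J * Real.exp (ψ t) = g b - g a := by
    apply intervalIntegral.integral_eq_sub_of_hasDeriv_right_of_le hab.le hgc
    · intro t ht
      exact (hgderiv t (Set.mem_Icc_of_Ioo ht)).mono_of_mem_nhdsWithin
        (Icc_mem_nhdsGT_of_mem ⟨ht.1.le, ht.2⟩)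
    · exact hJInt
  rw [intervalIntegral.integral_const_mul] at hftc
  have hdiff : Real.exp (ψ b) * u b - Real.exp (ψ a) * u a
      = J * ∫ t in a..b, Real.exp (ψ t) := hftc.symm
  rw [hdiff]
  have hba : b - a ≠ 0 := sub_ne_zero.mpr hab.ne'
  field_simp
end

section
/- Let V be a finite-dimensional real inner product space of dimension d ≥ 1, let q : Fin (d+1) → V be an affine basis, let λ_i : V → ℝ be the associated barycentric coordinate functions, and let g_i ∈ V be the gradient of λ_i. Then for every vector c ∈ V and every point x ∈ V, ∑_{0 ≤ i < j ≤ d} ⟨c, q_j − q_i⟩ · ( λ_i(x)·g_j − λ_j(x)·g_i ) = c. -/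
open Finset

/-- The lowest-order Nédélec (Whitney edge) expansion reproduces constant
vector fields: for an affine basis `q` of a `d`-dimensional real inner ℝ product
space with barycentric coordinates `λ i = b.coord i` and gradients `g i`,
every constant vector `c` satisfies
`∑_{i<j} ⟪c, q j - q i⟫ • (λ_i(x) • g j - λ_j(x) • g i) = c`. -/
theorem nedelec_reproduces_constants
    {V : Type*} [NormedAddCommGroup V] [InnerProductSpace ℝ V]
    [FiniteDimensional ℝ V]
    (d : ℕ) (hd : 1 ≤ d) (hdim : Module.finrank ℝ V = d)
    (b : AffineBasis (Fin (d + 1)) ℝ V)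
    (g : Fin (d + 1) → V)
    (hg : ∀ i, ∀ x y : V, b.coord i y - b.coord i x = inner ℝ (g i) (y - x))
    (c x : V) :
    ∑ i : Fin (d + 1), ∑ j ∈ univ.filter (fun j => i < j),
        (inner ℝ c (b j - b i) : ℝ) • ((b.coord i x) • g j - (b.coord j x) • g i)
      = c := by
  classical
  have hinner : ∀ i (v : V), (inner ℝ (g i) v : ℝ) = b.coord i v - b.coord i 0 := by
    intro i v
    have := hg i 0 v
    simpa using this.symm
  have hcomb : ∀ v : V, ∑ j, b.coord j v • (b j : V) = v :=
    fun v => b.linear_combination_coord_eq_self v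
  have hone : ∀ v : V, ∑ j, b.coord j v = 1 := fun v => b.sum_coord_apply_eq_one v
  have hglin : ∀ v : V, ∑ j, (inner ℝ (g j) v : ℝ) • (b j : V) = v := by
    intro v
    simp only [hinner, sub_smul, Finset.sum_sub_distrib, hcomb]
    simp [hcomb 0, hcomb v]
  have hgsum : ∑ j, g j = (0 : V) := by
    apply ext_inner_right ℝ
    intro v
    rw [sum_inner]
    simp [hinner, Finset.sum_sub_distrib, hone]
  have hT : ∑ j, (inner ℝ c (b j) : ℝ) • g j = c := by
    apply ext_inner_right ℝ
    intro v
    rw [sum_inner]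
    calc ∑ j, (inner ℝ ((inner ℝ c (b j) : ℝ) • g j) v : ℝ)
        = (inner ℝ c (∑ j, (inner ℝ (g j) v : ℝ) • (b j : V)) : ℝ) := by
          rw [inner_sum]
          refine Finset.sum_congr rfl fun j _ => ?_
          rw [real_inner_smul_left, real_inner_smul_right]
          ring
      _ = inner ℝ c v := by rw [hglin]
  set F : Fin (d+1) → Fin (d+1) → V := fun i j =>
    (inner ℝ c ((b j : V) - b i) : ℝ) • ((b.coord i x) • g j - (b.coord j x) • g i) with hF
  have hsymm : ∀ i j, F i j = F j i := by
    intro i j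
    simp only [hF, inner_sub_right, sub_smul, smul_sub]
    abel
  have hdiag : ∀ i, F i i = 0 := by intro i; simp [hF]
  -- the i<j sum counted twice equals the full double sum
  have key : (∑ i, ∑ j ∈ univ.filter (fun j => i < j), F i j)
      + (∑ i, ∑ j ∈ univ.filter (fun j => i < j), F i j) = ∑ i, ∑ j, F i j := by
    have h1 : (∑ i, ∑ j ∈ univ.filter (fun j => i < j), F i j)
        = ∑ i, ∑ j ∈ univ.filter (fun j => j < i), F i j := by
      simp only [Finset.sum_filter]
      rw [Finset.sum_comm]
      exact Finset.sum_congr rfl fun i _ => Finset.sum_congr rfl fun j _ => by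
        by_cases h : j < i <;> simp [h, hsymm i j]
    have h2 : ∀ i : Fin (d+1),
        (univ.filter (fun j => ¬ i < j)) = insert i (univ.filter (fun j => j < i)) := by
      intro i
      ext j
      simp only [Finset.mem_filter, Finset.mem_univ, true_and, Finset.mem_insert, not_lt]
      constructor
      · intro h
        rcases lt_or_eq_of_le h with h' | h'
        · exact Or.inr h'
        · exact Or.inl h'
      · rintro (rfl | h)
        · exact le_refl _
        · exact le_of_lt h
    nth_rewrite 2 [h1]
    rw [← Finset.sum_add_distrib]
    refine Finset.sum_congr rfl fun i _ => ?_
    rw [← Finset.sum_filter_add_sum_filter_not univ (fun j => i < j), h2 i,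
      Finset.sum_insert (by simp), hdiag, zero_add]
  -- compute the full double sum
  have hA : ∑ i, ∑ j, (inner ℝ c ((b j : V) - b i) : ℝ) • ((b.coord i x) • g j) = c := by
    rw [Finset.sum_comm]
    have step : ∀ j, ∑ i, (inner ℝ c ((b j : V) - b i) : ℝ) • ((b.coord i x) • g j)
        = ((inner ℝ c (b j) : ℝ) - inner ℝ c x) • g j := by
      intro j
      have hs : ∑ i, (inner ℝ c ((b j : V) - b i) : ℝ) * b.coord i x
          = (inner ℝ c (b j) : ℝ) - inner ℝ c x := by
        have hx : (inner ℝ c x : ℝ) = ∑ i, b.coord i x * (inner ℝ c (b i) : ℝ) := by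
          conv_lhs => rw [← hcomb x]
          rw [inner_sum]
          exact Finset.sum_congr rfl fun i _ => real_inner_smul_right _ _ _
        simp only [inner_sub_right, sub_mul, Finset.sum_sub_distrib]
        rw [← Finset.mul_sum, hone x, mul_one, hx]
        congr 1
        exact Finset.sum_congr rfl fun i _ => mul_comm _ _
      calc ∑ i, (inner ℝ c ((b j : V) - b i) : ℝ) • ((b.coord i x) • g j)
          = ∑ i, ((inner ℝ c ((b j : V) - b i) : ℝ) * b.coord i x) • g j := by
            refine Finset.sum_congr rfl fun i _ => ?_
            rw [smul_smul]
        _ = ((inner ℝ c (b j) : ℝ) - inner ℝ c x) • g j := by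
            rw [← Finset.sum_smul, hs]
    rw [Finset.sum_congr rfl fun j _ => step j]
    simp only [sub_smul, Finset.sum_sub_distrib, hT, ← Finset.smul_sum, hgsum, smul_zero,
      sub_zero]
  have total : ∑ i, ∑ j, F i j = c + c := by
    have hB : ∑ i, ∑ j, (inner ℝ c ((b j : V) - b i) : ℝ) • ((b.coord j x) • g i) = -c := by
      rw [Finset.sum_comm]
      have : ∀ j i, (inner ℝ c ((b j : V) - b i) : ℝ) • ((b.coord j x) • g i)
          = -((inner ℝ c ((b i : V) - b j) : ℝ) • ((b.coord j x) • g i)) := by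
        intro j i
        rw [show ((b j : V) - b i) = -((b i : V) - b j) by abel, inner_neg_right, neg_smul]
      simp only [this, Finset.sum_neg_distrib]
      rw [hA]
    calc ∑ i, ∑ j, F i j
        = (∑ i, ∑ j, (inner ℝ c ((b j : V) - b i) : ℝ) • ((b.coord i x) • g j))
          - ∑ i, ∑ j, (inner ℝ c ((b j : V) - b i) : ℝ) • ((b.coord j x) • g i) := by
          simp only [hF, smul_sub, Finset.sum_sub_distrib]
      _ = c + c := by rw [hA, hB]; abel
  have : (∑ i, ∑ j ∈ univ.filter (fun j => i < j), F i j)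
      + (∑ i, ∑ j ∈ univ.filter (fun j => i < j), F i j) = c + c := by rw [key, total]
  have h2 : (2 : ℝ) • (∑ i, ∑ j ∈ univ.filter (fun j => i < j), F i j) = (2 : ℝ) • c := by
    rw [two_smul, two_smul]; exact this
  have := smul_right_injective V (by norm_num : (2:ℝ) ≠ 0) h2
  exact this
end

section
/- Let V be a finite-dimensional real inner product space of dimension d ≥ 1, let q : Fin (d+1) → V be an affine basis, let λ_i : V → ℝ be the associated barycentric coordinate functions, and let g_i ∈ V be the gradient of λ_i. Let Φ : V → ℝ be an affine map and let ∇Φ ∈ V be its gradient (the unique vector with Φ(y) − Φ(x) = ⟨∇Φ, y − x⟩ for all x, y ∈ V). Then for every point x ∈ V, ∑_{0 ≤ i < j ≤ d} ( Φ(q_j) − Φ(q_i) ) · ( λ_i(x)·g_j − λ_j(x)·g_i ) = ∇Φ. -/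
open Finset

/-- Commutativity property of the canonical Nédélec interpolation: for an
affine map `Φ` with gradient `∇Φ = gradPhi`, the Nédélec edge expansion with
moments `Φ(q j) - Φ(q i)` reproduces `∇Φ` exactly:
`∑_{i<j} (Φ(q j) - Φ(q i)) • (λ_i(x) • g j - λ_j(x) • g i) = ∇Φ`. -/
theorem nedelec_reproduces_affine_gradient
    {V : Type*} [NormedAddCommGroup V] [InnerProductSpace ℝ V]
    [FiniteDimensional ℝ V]
    (d : ℕ) (hd : 1 ≤ d) (hdim : Module.finrank ℝ V = d)
    (b : AffineBasis (Fin (d + 1)) ℝ V)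
    (g : Fin (d + 1) → V)
    (hg : ∀ i, ∀ x y : V, b.coord i y - b.coord i x = inner ℝ (g i) (y - x))
    (Φ : V →ᵃ[ℝ] ℝ) (gradPhi : V)
    (hΦ : ∀ x y : V, Φ y - Φ x = inner ℝ gradPhi (y - x))
    (x : V) :
    ∑ i : Fin (d + 1), ∑ j ∈ univ.filter (fun j => i < j),
        (Φ (b j) - Φ (b i)) • ((b.coord i x) • g j - (b.coord j x) • g i)
      = gradPhi := by
  classical
  set c : Fin (d + 1) → ℝ := fun i => Φ (b i) with hc
  set L : Fin (d + 1) → ℝ := fun i => b.coord i x with hL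
  set F : Fin (d + 1) → Fin (d + 1) → V := fun i j => (c j - c i) • (L i • g j) with hF
  -- reproduction of affine maps from barycentric coordinates
  have hrepr : ∀ y : V, ∑ j, b.coord j y * c j = Φ y := by
    intro y
    have h1 := b.affineCombination_coord_eq_self y
    have hw : ∑ j, b.coord j y = 1 := b.sum_coord_apply_eq_one y
    have h2 := Finset.univ.map_affineCombination (⇑b) (fun j => b.coord j y) hw Φ
    rw [h1] at h2
    rw [Finset.univ.affineCombination_eq_linear_combination _ _ hw] at h2
    simpa [smul_eq_mul] using h2.symm
  -- Step 1: rewrite the edge sum as a full double sum of F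
  have key : (∑ i : Fin (d + 1), ∑ j ∈ univ.filter (fun j => i < j),
        (Φ (b j) - Φ (b i)) • ((b.coord i x) • g j - (b.coord j x) • g i))
      = ∑ i, ∑ j, F i j := by
    have hsplit : ∀ i j, (Φ (b j) - Φ (b i)) • ((b.coord i x) • g j - (b.coord j x) • g i)
        = F i j + F j i := by
      intro i j
      simp only [hF, hc, hL, smul_sub]
      rw [show (Φ (b i) - Φ (b j)) • (b.coord j x • g i)
          = -((Φ (b j) - Φ (b i)) • (b.coord j x • g i)) by rw [← neg_smul]; ring_nf]
      abel
    calc (∑ i : Fin (d + 1), ∑ j ∈ univ.filter (fun j => i < j),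
            (Φ (b j) - Φ (b i)) • ((b.coord i x) • g j - (b.coord j x) • g i))
        = ∑ i, ∑ j ∈ univ.filter (fun j => i < j), (F i j + F j i) := by
          simp only [hsplit]
      _ = (∑ i, ∑ j ∈ univ.filter (fun j => i < j), F i j)
          + ∑ i, ∑ j ∈ univ.filter (fun j => i < j), F j i := by
          rw [← Finset.sum_add_distrib]
          exact Finset.sum_congr rfl fun i _ => Finset.sum_add_distrib
      _ = (∑ i, ∑ j ∈ univ.filter (fun j => i < j), F i j)
          + ∑ i, ∑ j ∈ univ.filter (fun j => j < i), F i j := by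
          congr 1
          exact Finset.sum_comm' (fun i j => by simp)
      _ = ∑ i, (∑ j ∈ univ.filter (fun j => i < j), F i j
          + ∑ j ∈ univ.filter (fun j => j < i), F i j) := by
          rw [← Finset.sum_add_distrib]
      _ = ∑ i, ∑ j, F i j := by
          refine Finset.sum_congr rfl fun i _ => ?_
          have hdiag : F i i = 0 := by simp [hF]
          rw [← Finset.sum_filter_add_sum_filter_not univ (fun j => i < j) (F i)]
          congr 1
          have hset : univ.filter (fun j => ¬ i < j)
              = insert i (univ.filter (fun j => j < i)) := by
            ext j
            simp only [Finset.mem_filter, Finset.mem_univ, true_and, Finset.mem_insert,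
              not_lt]
            rw [le_iff_lt_or_eq, or_comm, eq_comm]
          rw [hset, Finset.sum_insert (by simp), hdiag, zero_add]
  rw [key]
  -- Step 2: compute the full double sum
  have hsum1 : ∑ i, L i = 1 := b.sum_coord_apply_eq_one x
  have hsum2 : ∑ i, L i * c i = Φ x := hrepr x
  have key2 : (∑ i, ∑ j, F i j) = ∑ j, (c j - Φ x) • g j := by
    rw [Finset.sum_comm]
    refine Finset.sum_congr rfl fun j _ => ?_
    have : ∑ i, F i j = (∑ i, (c j - c i) * L i) • g j := by
      rw [Finset.sum_smul]
      refine Finset.sum_congr rfl fun i _ => ?_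
      simp only [hF, smul_smul]
    rw [this]
    congr 1
    have : ∑ i, (c j - c i) * L i = c j * (∑ i, L i) - ∑ i, L i * c i := by
      rw [Finset.mul_sum, ← Finset.sum_sub_distrib]
      exact Finset.sum_congr rfl fun i _ => by ring
    rw [this, hsum1, hsum2, mul_one]
  rw [key2]
  -- Step 3: identify with gradPhi via inner products
  refine ext_inner_right ℝ fun u => ?_
  rw [sum_inner]
  have hterm : ∀ j, (inner ℝ ((c j - Φ x) • g j) u : ℝ)
      = (c j - Φ x) * (b.coord j (x + u) - b.coord j x) := by
    intro j
    have h2 := hg j x (x + u)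
    rw [add_sub_cancel_left] at h2
    rw [real_inner_smul_left, ← h2]
  simp only [hterm]
  have expand : ∑ j, (c j - Φ x) * (b.coord j (x + u) - b.coord j x)
      = (∑ j, b.coord j (x + u) * c j) - (∑ j, b.coord j x * c j)
        - Φ x * ((∑ j, b.coord j (x + u)) - ∑ j, b.coord j x) := by
    rw [← Finset.sum_sub_distrib, ← Finset.sum_sub_distrib, Finset.mul_sum,
      ← Finset.sum_sub_distrib]
    refine Finset.sum_congr rfl fun j _ => ?_
    ring
  rw [expand, hrepr, hrepr, b.sum_coord_apply_eq_one, b.sum_coord_apply_eq_one,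
    sub_self, mul_zero, sub_zero, hΦ x (x + u)]
  congr 1
  abel
end

section
/- Let V be a finite-dimensional real inner product space of dimension d ≥ 1, let q : Fin (d+1) → V be an affine basis, let λ_i : V → ℝ be the associated barycentric coordinate functions, and let g_i ∈ V be the gradient of λ_i. Let D : V → V be a symmetric linear map, i.e., ⟨D v, w⟩ = ⟨v, D w⟩ for all v, w ∈ V. Then for all affine maps u, v : V → ℝ with gradients ∇u, ∇v ∈ V, ⟨D ∇u, ∇v⟩ = − ∑_{0 ≤ i < j ≤ d} ⟨D g_i, g_j⟩ · ( u(q_i) − u(q_j) ) · ( v(q_i) − v(q_j) ). -/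
open Finset

private lemma pair_sum_aux {n : ℕ} (f : Fin n → Fin n → ℝ)
    (hsymm : ∀ i j, f i j = f j i) (hdiag : ∀ i, f i i = 0) :
    ∑ i : Fin n, ∑ j : Fin n, f i j
      = 2 * ∑ i : Fin n, ∑ j ∈ univ.filter (fun j => i < j), f i j := by
  have hsplit : ∀ i : Fin n, ∑ j : Fin n, f i j
      = (∑ j ∈ univ.filter (fun j => i < j), f i j)
        + ∑ j ∈ univ.filter (fun j => j < i), f i j := by
    intro i
    rw [← Finset.sum_filter_add_sum_filter_not univ (fun j => i < j) (f i)]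
    congr 1
    refine (Finset.sum_subset ?_ ?_).symm
    · intro j hj
      simp only [mem_filter, mem_univ, true_and] at hj ⊢
      exact not_lt_of_gt hj
    · intro j hjt hjs
      simp only [mem_filter, mem_univ, true_and] at hjt hjs
      have : j = i := le_antisymm (not_lt.mp hjt) (not_lt.mp hjs)
      subst this; exact hdiag j
  have hswap : ∑ i : Fin n, ∑ j ∈ univ.filter (fun j => j < i), f i j
      = ∑ i : Fin n, ∑ j ∈ univ.filter (fun j => i < j), f i j := by
    rw [Finset.sum_comm' (s' := fun j => univ.filter (fun i => j < i)) (t' := univ)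
      (by intro x y; simp)]
    exact Finset.sum_congr rfl fun j _ => Finset.sum_congr rfl fun i _ => hsymm _ _
  calc ∑ i : Fin n, ∑ j : Fin n, f i j
      = (∑ i : Fin n, ∑ j ∈ univ.filter (fun j => i < j), f i j)
        + ∑ i : Fin n, ∑ j ∈ univ.filter (fun j => j < i), f i j := by
        rw [← Finset.sum_add_distrib]; exact Finset.sum_congr rfl fun i _ => hsplit i
    _ = 2 * ∑ i : Fin n, ∑ j ∈ univ.filter (fun j => i < j), f i j := by
        rw [hswap]; ring

/-- Edge-difference decomposition of the diffusion bilinear form: for a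
symmetric linear map `D` and affine maps `u`, `v` with gradients `gu`, `gv`,
`⟪D gu, gv⟫ = - ∑_{i<j} ⟪D g_i, g_j⟫ (u(q_i) - u(q_j)) (v(q_i) - v(q_j))`,
where `g i` is the gradient of the barycentric coordinate `b.coord i`. -/
theorem diffusion_form_edge_decomposition
    {V : Type*} [NormedAddCommGroup V] [InnerProductSpace ℝ V]
    [FiniteDimensional ℝ V]
    (d : ℕ) (hd : 1 ≤ d) (hdim : Module.finrank ℝ V = d)
    (b : AffineBasis (Fin (d + 1)) ℝ V)
    (g : Fin (d + 1) → V)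
    (hg : ∀ i, ∀ x y : V, b.coord i y - b.coord i x = inner ℝ (g i) (y - x))
    (D : V →ₗ[ℝ] V)
    (hD : ∀ v w : V, (inner ℝ (D v) w : ℝ) = inner ℝ v (D w))
    (u v : V →ᵃ[ℝ] ℝ) (gu gv : V)
    (hu : ∀ x y : V, u y - u x = inner ℝ gu (y - x))
    (hv : ∀ x y : V, v y - v x = inner ℝ gv (y - x)) :
    (inner ℝ (D gu) gv : ℝ)
      = - ∑ i : Fin (d + 1), ∑ j ∈ univ.filter (fun j => i < j),
          (inner ℝ (D (g i)) (g j) : ℝ) * (u (b i) - u (b j)) * (v (b i) - v (b j)) := by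
  -- any affine map is the barycentric combination of its vertex values
  have hbary : ∀ (w : V →ᵃ[ℝ] ℝ) (x : V), w x = ∑ i, b.coord i x * w (b i) := by
    intro w x
    conv_lhs => rw [← b.affineCombination_coord_eq_self x]
    rw [Finset.map_affineCombination _ _ _ (b.sum_coord_apply_eq_one x) w,
      Finset.affineCombination_eq_linear_combination _ _ _ (b.sum_coord_apply_eq_one x)]
    simp [Function.comp]
  -- gradient of an affine map is the combination of the g i
  have hgrad : ∀ (w : V →ᵃ[ℝ] ℝ) (gw : V),
      (∀ x y : V, w y - w x = inner ℝ gw (y - x)) → gw = ∑ i, w (b i) • g i := by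
    intro w gw hw
    refine ext_inner_right ℝ fun z => ?_
    have h1 : (inner ℝ gw z : ℝ) = w z - w 0 := by
      have := hw 0 z; rw [sub_zero] at this; exact this.symm
    rw [h1, hbary w z, hbary w 0, sum_inner, ← Finset.sum_sub_distrib]
    refine Finset.sum_congr rfl fun i _ => ?_
    have hgi : (inner ℝ (g i) z : ℝ) = b.coord i z - b.coord i 0 := by
      have := hg i 0 z; rw [sub_zero] at this; exact this.symm
    rw [real_inner_smul_left, hgi]; ring
  have hgu : gu = ∑ i, u (b i) • g i := hgrad u gu hu
  have hgv : gv = ∑ i, v (b i) • g i := hgrad v gv hv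
  -- the g i sum to zero
  have hgsum : ∑ i, g i = 0 := by
    refine ext_inner_right ℝ fun z => ?_
    rw [sum_inner, inner_zero_left]
    have : ∑ i, (inner ℝ (g i) z : ℝ) = ∑ i, (b.coord i z - b.coord i 0) := by
      refine Finset.sum_congr rfl fun i _ => ?_
      have := hg i 0 z; rw [sub_zero] at this; exact this.symm
    rw [this, Finset.sum_sub_distrib, b.sum_coord_apply_eq_one, b.sum_coord_apply_eq_one, sub_self]
  set ω : Fin (d + 1) → Fin (d + 1) → ℝ := fun i j => inner ℝ (D (g i)) (g j) with hω
  have hωsymm : ∀ i j, ω i j = ω j i := fun i j => by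
    rw [hω]; dsimp only; rw [hD, real_inner_comm]
  have hrow : ∀ i, ∑ j, ω i j = 0 := fun i => by
    rw [hω]; dsimp only
    rw [← inner_sum, hgsum, inner_zero_right]
  have hcol : ∀ j, ∑ i, ω i j = 0 := fun j => by
    have : ∑ i, ω i j = ∑ i, ω j i := Finset.sum_congr rfl fun i _ => hωsymm i j
    rw [this, hrow]
  -- expand the LHS
  have hLHS : (inner ℝ (D gu) gv : ℝ) = ∑ i, ∑ j, u (b i) * v (b j) * ω i j := by
    rw [hgu, hgv, map_sum, sum_inner]
    refine Finset.sum_congr rfl fun i _ => ?_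
    rw [map_smul, real_inner_smul_left, inner_sum, Finset.mul_sum]
    refine Finset.sum_congr rfl fun j _ => ?_
    rw [real_inner_smul_right]; ring
  -- the symmetrized sum
  set f : Fin (d+1) → Fin (d+1) → ℝ :=
    fun i j => ω i j * (u (b i) - u (b j)) * (v (b i) - v (b j)) with hf
  have hfsymm : ∀ i j, f i j = f j i := fun i j => by
    rw [hf]; dsimp only; rw [hωsymm i j]; ring
  have hfdiag : ∀ i, f i i = 0 := fun i => by rw [hf]; dsimp only; ring
  have hfullsum : ∑ i, ∑ j, f i j = -2 * (inner ℝ (D gu) gv : ℝ) := by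
    rw [hLHS]
    have expand : ∀ i j, f i j
        = ω i j * (u (b i) * v (b i)) + ω i j * (u (b j) * v (b j))
          - ω i j * (u (b i) * v (b j)) - ω i j * (u (b j) * v (b i)) := by
      intro i j; rw [hf]; ring
    calc ∑ i, ∑ j, f i j
        = (∑ i, ∑ j, ω i j * (u (b i) * v (b i)))
          + (∑ i, ∑ j, ω i j * (u (b j) * v (b j)))
          - (∑ i, ∑ j, ω i j * (u (b i) * v (b j)))
          - (∑ i, ∑ j, ω i j * (u (b j) * v (b i))) := by
          simp_rw [expand, Finset.sum_sub_distrib, Finset.sum_add_distrib]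
      _ = -2 * ∑ i, ∑ j, u (b i) * v (b j) * ω i j := by
          have t1 : ∑ i, ∑ j, ω i j * (u (b i) * v (b i)) = 0 := by
            refine Finset.sum_eq_zero fun i _ => ?_
            rw [← Finset.sum_mul, hrow, zero_mul]
          have t4 : ∑ i, ∑ j, ω i j * (u (b j) * v (b j)) = 0 := by
            rw [Finset.sum_comm]
            refine Finset.sum_eq_zero fun j _ => ?_
            rw [← Finset.sum_mul, hcol, zero_mul]
          have t3 : ∑ i, ∑ j, ω i j * (u (b j) * v (b i))
              = ∑ i, ∑ j, u (b i) * v (b j) * ω i j := by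
            rw [Finset.sum_comm]
            refine Finset.sum_congr rfl fun j _ => Finset.sum_congr rfl fun i _ => ?_
            rw [hωsymm i j]; ring
          have t2 : ∑ i, ∑ j, ω i j * (u (b i) * v (b j))
              = ∑ i, ∑ j, u (b i) * v (b j) * ω i j := by
            refine Finset.sum_congr rfl fun i _ => Finset.sum_congr rfl fun j _ => ?_
            ring
          rw [t1, t4, t3, t2]; ring
  have := pair_sum_aux f hfsymm hfdiag
  rw [hfullsum] at this
  have h2 : (inner ℝ (D gu) gv : ℝ)
      = - ∑ i : Fin (d+1), ∑ j ∈ univ.filter (fun j => i < j), f i j := by linarith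
  simpa only [hf] using h2
end

section
/- Let V be a real normed space, let W be a finite-dimensional linear subspace of V, let a, a_h : V → V → ℝ be bilinear maps, let F : V → ℝ be a linear map, and let c₂ > 0, ε ≥ 0 with ε < c₂, and δ ≥ 0. Assume: (i) for every z ∈ W with z ≠ 0 there exists v ∈ W with v ≠ 0 such that a(z, v) ≥ c₂·‖z‖·‖v‖; (ii) |a(z, v) − a_h(z, v)| ≤ ε·‖z‖·‖v‖ for all z, v ∈ W; and (iii) w ∈ W satisfies |F(v) − a_h(w, v)| ≤ δ·‖v‖ for all v ∈ W. Then there exists a unique u_h ∈ W with a_h(u_h, v) = F(v) for all v ∈ W, and it satisfies ‖w − u_h‖ ≤ δ / (c₂ − ε). -/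
/-- Combined abstract form of Lemma 3.3 and Theorem 3.4: inf-sup for `a` on a
finite-dimensional subspace `W` with constant `c₂`, a perturbation bound
`|a - a_h| ≤ ε‖·‖‖·‖` on `W` with `ε < c₂`, and a consistency bound `δ` for
`w ∈ W` together yield a unique discrete solution `u_h ∈ W` of
`a_h(u_h, v) = F(v)` on `W`, with the error bound `‖w - u_h‖ ≤ δ / (c₂ - ε)`. -/
theorem combined_solvability_and_error
    {V : Type*} [NormedAddCommGroup V] [NormedSpace ℝ V]
    (W : Submodule ℝ V) [FiniteDimensional ℝ W]
    (a ah : V →ₗ[ℝ] V →ₗ[ℝ] ℝ) (F : V →ₗ[ℝ] ℝ)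
    (c₂ ε δ : ℝ) (hc₂ : 0 < c₂) (hε : 0 ≤ ε) (hεc : ε < c₂) (hδ : 0 ≤ δ)
    (hinfsup : ∀ z ∈ W, z ≠ 0 → ∃ v ∈ W, v ≠ 0 ∧ a z v ≥ c₂ * ‖z‖ * ‖v‖)
    (hpert : ∀ z ∈ W, ∀ v ∈ W, |a z v - ah z v| ≤ ε * ‖z‖ * ‖v‖)
    (w : V) (hwW : w ∈ W)
    (hcons : ∀ v ∈ W, |F v - ah w v| ≤ δ * ‖v‖) :
    (∃! uh : V, uh ∈ W ∧ ∀ v ∈ W, ah uh v = F v) ∧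
    (∀ uh : V, uh ∈ W → (∀ v ∈ W, ah uh v = F v) →
      ‖w - uh‖ ≤ δ / (c₂ - ε)) := by
  -- the key discrete inf-sup for ah
  have key : ∀ z ∈ W, z ≠ 0 → ∃ v ∈ W, v ≠ 0 ∧ ah z v ≥ (c₂ - ε) * ‖z‖ * ‖v‖ := by
    intro z hzW hz
    obtain ⟨v, hvW, hv, hav⟩ := hinfsup z hzW hz
    refine ⟨v, hvW, hv, ?_⟩
    have hp := hpert z hzW v hvW
    have := abs_le.mp hp
    nlinarith [this.1, this.2]
  have hzero : ∀ z ∈ W, (∀ v ∈ W, ah z v = 0) → z = 0 := by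
    intro z hzW hzv
    by_contra hz
    obtain ⟨v, hvW, hv, hav⟩ := key z hzW hz
    have h1 : (0:ℝ) < ‖z‖ := norm_pos_iff.mpr hz
    have h2 : (0:ℝ) < ‖v‖ := norm_pos_iff.mpr hv
    have : ah z v > 0 := lt_of_lt_of_le (by nlinarith [mul_pos (mul_pos (show (0:ℝ) < c₂ - ε by linarith) h1) h2]) hav
    rw [hzv v hvW] at this
    exact lt_irrefl 0 this
  -- the operator T : W →ₗ Dual W
  let T : W →ₗ[ℝ] (W →ₗ[ℝ] ℝ) :=
    { toFun := fun z => (ah z).domRestrict W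
      map_add' := by intro x y; ext v; simp
      map_smul' := by intro c x; ext v; simp }
  have hTinj : Function.Injective T := by
    rw [← LinearMap.ker_eq_bot, LinearMap.ker_eq_bot']
    intro z hz
    have : (z : V) = 0 := by
      apply hzero z z.2
      intro v hvW
      have := congrFun (congrArg (fun f => f.toFun) hz) ⟨v, hvW⟩
      simpa [T] using this
    exact Subtype.ext this
  have hTsurj : Function.Surjective T :=
    (LinearMap.injective_iff_surjective_of_finrank_eq_finrank
      (by simpa using (Subspace.dual_finrank_eq (V := W) (K := ℝ)).symm)).mp hTinj
  obtain ⟨z, hz⟩ := hTsurj (F.domRestrict W)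
  have hzsol : ∀ v ∈ W, ah (z : V) v = F v := by
    intro v hvW
    have := congrFun (congrArg (fun f => f.toFun) hz) ⟨v, hvW⟩
    simpa [T] using this
  constructor
  · refine ⟨z, ⟨z.2, hzsol⟩, ?_⟩
    rintro y ⟨hyW, hy⟩
    have : y - (z : V) = 0 := by
      apply hzero _ (W.sub_mem hyW z.2)
      intro v hvW
      simp [hy v hvW, hzsol v hvW]
    exact sub_eq_zero.mp this
  · intro uh huhW huh
    set e := w - uh with he
    have heW : e ∈ W := W.sub_mem hwW huhW
    rcases eq_or_ne e 0 with h0 | h0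
    · rw [h0, norm_zero]; exact div_nonneg hδ (by linarith)
    · obtain ⟨v, hvW, hv, hav⟩ := key e heW h0
      have h1 : (0:ℝ) < ‖e‖ := norm_pos_iff.mpr h0
      have h2 : (0:ℝ) < ‖v‖ := norm_pos_iff.mpr hv
      have hev : ah e v = ah w v - F v := by
        simp [he, map_sub, huh v hvW]
      have hb : ah e v ≤ δ * ‖v‖ := by
        rw [hev]
        have := abs_le.mp (hcons v hvW)
        linarith [this.1]
      have : (c₂ - ε) * ‖e‖ * ‖v‖ ≤ δ * ‖v‖ := le_trans hav hb
      have hle : (c₂ - ε) * ‖e‖ ≤ δ := by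
        have := mul_le_mul_iff_of_pos_right h2 |>.mp this
        linarith
      rw [le_div_iff₀ (by linarith : (0:ℝ) < c₂ - ε)]
      nlinarith
end
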